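/- The double antinorm equals the original norm: for every x in X, ||x||_{a,a} = ||x||, where ||·||_{a,a} is the antinorm of the normed space (X, ||·||_a) with respect to the same symplectic form. -/

import Mathlib

noncomputable def antinormF {X : Type*} [NormedAddCommGroup X] [NormedSpace ℝ X]
    (ω : X →ₗ[ℝ] X →ₗ[ℝ] ℝ) (N : X → ℝ) (x : X) : ℝ :=
  sSup {r : ℝ | ∃ y : X, N y = 1 ∧ r = ω y x}

lemma sSup_sphere_eq_opNorm {X : Type*} [NormedAddCommGroup X] [NormedSpace ℝ X]
    [Nontrivial X] (f : X →L[ℝ] ℝ) :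
    sSup {r : ℝ | ∃ y : X, ‖y‖ = 1 ∧ r = f y} = ‖f‖ := by
  set S := {r : ℝ | ∃ y : X, ‖y‖ = 1 ∧ r = f y} with hS
  obtain ⟨u, hu⟩ := exists_norm_eq X (zero_le_one (α := ℝ))
  have hne : S.Nonempty := ⟨f u, u, hu, rfl⟩
  have hbdd : ∀ r ∈ S, r ≤ ‖f‖ := by
    rintro r ⟨y, hy, rfl⟩
    calc f y ≤ |f y| := le_abs_self _
    _ = ‖f y‖ := rfl
    _ ≤ ‖f‖ * ‖y‖ := f.le_opNorm y
    _ = ‖f‖ := by rw [hy, mul_one]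
  have hmem : ∀ y : X, ‖y‖ = 1 → f y ≤ sSup S := fun y hy =>
    le_csSup ⟨‖f‖, fun r hr => hbdd r hr⟩ ⟨y, hy, rfl⟩
  have habs : ∀ y : X, ‖y‖ = 1 → |f y| ≤ sSup S := by
    intro y hy
    rcases abs_cases (f y) with ⟨h, _⟩ | ⟨h, _⟩
    · rw [h]; exact hmem y hy
    · rw [h]
      have : f (-y) ≤ sSup S := hmem (-y) (by rw [norm_neg, hy])
      simpa using this
  have hnn : 0 ≤ sSup S := le_trans (abs_nonneg _) (habs u hu)
  refine le_antisymm (csSup_le hne hbdd) ?_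
  refine f.opNorm_le_bound hnn ?_
  intro y
  rcases eq_or_ne y 0 with rfl | hy0
  · simp
  · have hny : ‖y‖ ≠ 0 := norm_ne_zero_iff.mpr hy0
    have hz : ‖(‖y‖⁻¹ • y)‖ = 1 := by
      rw [norm_smul, norm_inv, norm_norm, inv_mul_cancel₀ hny]
    have := habs _ hz
    rw [map_smul] at this
    have h2 : |(‖y‖)⁻¹ * f y| = ‖y‖⁻¹ * |f y| := by
      rw [abs_mul, abs_of_nonneg (by positivity)]
    rw [smul_eq_mul, h2] at this
    calc ‖f y‖ = |f y| := rfl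
    _ = ‖y‖ * (‖y‖⁻¹ * |f y|) := by field_simp
    _ ≤ ‖y‖ * sSup S := by
        exact mul_le_mul_of_nonneg_left this (norm_nonneg y)
    _ = sSup S * ‖y‖ := mul_comm _ _

theorem stmt4 {X : Type*} [NormedAddCommGroup X] [NormedSpace ℝ X]
    [FiniteDimensional ℝ X] [Nontrivial X] [StrictConvexSpace ℝ X]
    (ω : X →ₗ[ℝ] X →ₗ[ℝ] ℝ)
    (hskew : ∀ x y : X, ω x y = - ω y x)
    (hnd : ∀ x : X, (∀ y : X, ω x y = 0) → x = 0)
    (heven : Even (Module.finrank ℝ X))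
    (hsmooth : ∀ x : X, x ≠ 0 → ∃! f : X →L[ℝ] ℝ, ‖f‖ = 1 ∧ f x = ‖x‖)
    (x : X) :
    antinormF ω (antinormF ω (fun y => ‖y‖)) x = ‖x‖ := by
  classical
  -- Lc y = continuous version of z ↦ ω z y
  set Lc : X → (X →L[ℝ] ℝ) := fun y => LinearMap.toContinuousLinearMap (ω.flip y) with hLc
  have hLc_apply : ∀ y z : X, Lc y z = ω z y := fun y z => rfl
  -- step 1 : antinorm = ‖Lc y‖
  have step1 : ∀ y : X, antinormF ω (fun z => ‖z‖) y = ‖Lc y‖ := by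
    intro y
    unfold antinormF
    have : {r : ℝ | ∃ z : X, ‖z‖ = 1 ∧ r = ω z y} =
        {r : ℝ | ∃ z : X, ‖z‖ = 1 ∧ r = Lc y z} := by
      ext r; constructor <;> rintro ⟨z, hz, rfl⟩ <;> exact ⟨z, hz, (hLc_apply y z).symm ▸ rfl⟩
    rw [this, sSup_sphere_eq_opNorm]
  -- injectivity and surjectivity of ω.flip
  have hinj : Function.Injective ω.flip := by
    rw [← LinearMap.ker_eq_bot, LinearMap.ker_eq_bot']
    intro m hm
    apply hnd
    intro y
    have : ω.flip m y = 0 := by rw [hm]; rfl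
    rw [LinearMap.flip_apply] at this
    rw [hskew]; rw [this]; ring
  have hsurj : Function.Surjective ω.flip :=
    (LinearMap.injective_iff_surjective_of_finrank_eq_finrank
      (Subspace.dual_finrank_eq).symm).mp hinj
  -- the defining set of the double antinorm
  have hset : {r : ℝ | ∃ y : X, antinormF ω (fun z => ‖z‖) y = 1 ∧ r = ω y x} =
      {r : ℝ | ∃ y : X, ‖Lc y‖ = 1 ∧ r = ω y x} := by
    ext r; constructor <;> rintro ⟨y, hy, rfl⟩
    · exact ⟨y, by rw [← step1]; exact hy, rfl⟩
    · exact ⟨y, by rw [step1]; exact hy, rfl⟩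
  rw [show antinormF ω (antinormF ω (fun y => ‖y‖)) x
      = sSup {r : ℝ | ∃ y : X, antinormF ω (fun z => ‖z‖) y = 1 ∧ r = ω y x} from rfl, hset]
  set S := {r : ℝ | ∃ y : X, ‖Lc y‖ = 1 ∧ r = ω y x} with hSdef
  have hbdd : ∀ r ∈ S, r ≤ ‖x‖ := by
    rintro r ⟨y, hy, rfl⟩
    have h1 : ω y x = - (Lc y x) := by rw [hLc_apply]; exact hskew y x
    rw [h1]
    calc -(Lc y x) ≤ |Lc y x| := neg_le_abs _
    _ = ‖Lc y x‖ := rfl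
    _ ≤ ‖Lc y‖ * ‖x‖ := (Lc y).le_opNorm x
    _ = ‖x‖ := by rw [hy, one_mul]
  -- nonempty: find y with ‖Lc y‖ = 1
  have hLc_smul : ∀ (c : ℝ) (u : X), Lc (c • u) = c • Lc u := by
    intro c u
    apply ContinuousLinearMap.coe_injective
    ext z
    simp [hLc_apply, map_smul]
  rcases eq_or_ne x 0 with rfl | hx0
  · -- x = 0
    obtain ⟨u, hu0⟩ := exists_ne (0 : X)
    have hωu : Lc u ≠ 0 := by
      intro h
      apply hu0
      apply hinj
      have : ω.flip u = ((0 : X →L[ℝ] ℝ) : X →ₗ[ℝ] ℝ) := by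
        ext z
        have := congrFun (congrArg (fun (f : X →L[ℝ] ℝ) => (f : X → ℝ)) h) z
        simpa [hLc_apply] using this
      simpa using this
    have hnu : ‖Lc u‖ ≠ 0 := norm_ne_zero_iff.mpr hωu
    have hmem : (0 : ℝ) ∈ S := by
      refine ⟨‖Lc u‖⁻¹ • u, ?_, by simp⟩
      rw [hLc_smul, norm_smul (‖Lc u‖⁻¹) (Lc u)]
      simp [inv_mul_cancel₀ hnu]
    have hS0 : S = {0} := by
      apply Set.eq_singleton_iff_unique_mem.mpr
      refine ⟨hmem, ?_⟩
      rintro r ⟨y, hy, rfl⟩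
      simp
    rw [hS0, csSup_singleton, norm_zero]
  · obtain ⟨g, hg1, hgx⟩ := exists_dual_vector ℝ x (norm_ne_zero_iff.mpr hx0)
    obtain ⟨y, hy⟩ := hsurj (-(g : X →ₗ[ℝ] ℝ))
    have hLcy : Lc y = -g := by
      ext z
      have h := LinearMap.congr_fun hy z
      simpa [hLc_apply] using h
    have hmem : ‖x‖ ∈ S := by
      refine ⟨y, by rw [hLcy, norm_neg, hg1], ?_⟩
      have : ω y x = -(Lc y x) := by rw [hLc_apply]; exact hskew y x
      rw [this, hLcy]
      simp only [ContinuousLinearMap.neg_apply, neg_neg]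
      exact_mod_cast hgx.symm
    exact le_antisymm (csSup_le ⟨‖x‖, hmem⟩ hbdd) (le_csSup ⟨‖x‖, hbdd⟩ hmem)
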